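/- Let $G:[0,\infty)\to\mathbb{R}$ be convex and decreasing with $G(0) = 1$, and let $\gamma = G(1/2) - G(1) > 0$. Suppose for every $s > 0$ that $G(s) - G(2s) \le \sqrt{G(2s) - G(4s)}$. Then for every integer $r \ge 2$, $G(2^{-r}) - G(1/2) \le r\,\gamma^{1/2^{r-1}}$. -/

import Mathlib

theorem stmt18 (G : ℝ → ℝ) (hGconv : ConvexOn ℝ (Set.Ici (0 : ℝ)) G)
    (hGanti : AntitoneOn G (Set.Ici (0 : ℝ))) (hG0 : G 0 = 1)
    (γ : ℝ) (hγ : γ = G (1 / 2) - G 1) (hγpos : 0 < γ)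
    (hCS : ∀ s : ℝ, 0 < s → G s - G (2 * s) ≤ Real.sqrt (G (2 * s) - G (4 * s))) :
    ∀ r : ℕ, 2 ≤ r →
      G (((2 : ℝ) ^ r)⁻¹) - G (1 / 2) ≤ r * γ ^ ((1 : ℝ) / 2 ^ (r - 1)) := by
  have hdiff : ∀ s : ℝ, 0 < s → 0 ≤ G s - G (2 * s) := by
    intro s hs
    have := hGanti (Set.mem_Ici.mpr hs.le) (Set.mem_Ici.mpr (by linarith : (0:ℝ) ≤ 2 * s))
      (by linarith)
    linarith
  have hconv2 : ∀ s : ℝ, 0 < s → G (2 * s) - G (4 * s) ≤ 2 * (G s - G (2 * s)) := by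
    intro s hs
    have h := hGconv.2 (Set.mem_Ici.mpr hs.le)
      (Set.mem_Ici.mpr (show (0:ℝ) ≤ 4 * s by linarith))
      (show (0:ℝ) ≤ 2/3 by norm_num) (show (0:ℝ) ≤ 1/3 by norm_num) (by norm_num)
    simp only [smul_eq_mul] at h
    have heq : (2/3 : ℝ) * s + (1/3) * (4 * s) = 2 * s := by ring
    rw [heq] at h
    linarith
  have hb2 : ∀ s : ℝ, 0 < s → G s - G (2 * s) ≤ 2 := by
    intro s hs
    have h1 : G s - G (2 * s) ≤ Real.sqrt (2 * (G s - G (2 * s))) :=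
      (hCS s hs).trans (Real.sqrt_le_sqrt (hconv2 s hs))
    have h2 : (0:ℝ) ≤ 2 * (G s - G (2 * s)) := by linarith [hdiff s hs]
    nlinarith [Real.sq_sqrt h2, Real.sqrt_nonneg (2 * (G s - G (2 * s))), hdiff s hs]
  have hbn : ∀ n : ℕ, ∀ s : ℝ, 0 < s → G s - G (2 * s) ≤ (2:ℝ) ^ ((1:ℝ)/2^n) := by
    intro n
    induction n with
    | zero => intro s hs; simpa using hb2 s hs
    | succ n ih =>
      intro s hs
      have h4 : (4:ℝ) * s = 2 * (2 * s) := by ring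
      have hstep : G (2 * s) - G (4 * s) ≤ (2:ℝ) ^ ((1:ℝ)/2^n) := by
        rw [h4]; exact ih (2 * s) (by linarith)
      calc G s - G (2 * s) ≤ Real.sqrt (G (2 * s) - G (4 * s)) := hCS s hs
        _ ≤ Real.sqrt ((2:ℝ) ^ ((1:ℝ)/2^n)) := Real.sqrt_le_sqrt hstep
        _ = (2:ℝ) ^ ((1:ℝ)/2^(n+1)) := by
            rw [Real.sqrt_eq_rpow, ← Real.rpow_mul (by norm_num : (0:ℝ) ≤ 2)]
            congr 1
            rw [pow_succ]
            ring
  have hG12 : G 1 - G 2 ≤ 1 := by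
    have h0 : Filter.Tendsto (fun n : ℕ => (1:ℝ)/2^n) Filter.atTop (nhds 0) := by
      simpa [div_pow] using
        tendsto_pow_atTop_nhds_zero_of_lt_one (by norm_num : (0:ℝ) ≤ 1/2) (by norm_num)
    have hlim : Filter.Tendsto (fun n : ℕ => (2:ℝ) ^ ((1:ℝ)/2^n)) Filter.atTop (nhds 1) := by
      have hc : ContinuousAt (fun x : ℝ => (2:ℝ) ^ x) 0 :=
        Real.continuousAt_const_rpow (by norm_num)
      have := hc.tendsto.comp h0
      simpa [Function.comp_def] using this
    refine ge_of_tendsto hlim ?_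
    filter_upwards with n
    have h := hbn n 1 one_pos
    rw [mul_one] at h
    exact h
  have hγ1 : γ ≤ 1 := by
    have h := hCS (1/2) (by norm_num)
    rw [show (2:ℝ)*(1/2) = 1 by norm_num, show (4:ℝ)*(1/2) = 2 by norm_num] at h
    calc γ = G (1/2) - G 1 := hγ
      _ ≤ Real.sqrt (G 1 - G 2) := h
      _ ≤ Real.sqrt 1 := Real.sqrt_le_sqrt hG12
      _ = 1 := Real.sqrt_one
  have key : ∀ k : ℕ, G (((2:ℝ)^(k+1))⁻¹) - G (((2:ℝ)^k)⁻¹) ≤ γ ^ ((1:ℝ)/2^k) := by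
    intro k
    induction k with
    | zero =>
      rw [show ((1:ℝ)/2^(0:ℕ)) = 1 by norm_num, Real.rpow_one]
      norm_num
      rw [hγ]
      norm_num
    | succ k ih =>
      have hs : (0:ℝ) < ((2:ℝ)^(k+2))⁻¹ := by positivity
      have h2s : 2 * ((2:ℝ)^(k+2))⁻¹ = ((2:ℝ)^(k+1))⁻¹ := by
        have : (2:ℝ)^(k+2) = 2 * 2^(k+1) := by rw [pow_succ]; ring
        rw [this, mul_inv]
        field_simp
      have h4s : 4 * ((2:ℝ)^(k+2))⁻¹ = ((2:ℝ)^k)⁻¹ := by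
        have : (2:ℝ)^(k+2) = 4 * 2^k := by rw [pow_add]; ring
        rw [this, mul_inv]
        field_simp
      have h := hCS _ hs
      rw [h2s, h4s] at h
      calc G (((2:ℝ)^(k+1+1))⁻¹) - G (((2:ℝ)^(k+1))⁻¹)
          ≤ Real.sqrt (G (((2:ℝ)^(k+1))⁻¹) - G (((2:ℝ)^k)⁻¹)) := h
        _ ≤ Real.sqrt (γ ^ ((1:ℝ)/2^k)) := Real.sqrt_le_sqrt ih
        _ = γ ^ ((1:ℝ)/2^(k+1)) := by
            rw [Real.sqrt_eq_rpow, ← Real.rpow_mul hγpos.le]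
            congr 1
            rw [pow_succ]
            ring
  have hsum : ∀ r : ℕ, 1 ≤ r →
      G (((2:ℝ)^r)⁻¹) - G (((2:ℝ)^(1:ℕ))⁻¹) ≤ ((r:ℝ) - 1) * γ ^ ((1:ℝ)/2^(r-1)) := by
    intro r hr
    induction r, hr using Nat.le_induction with
    | base => simp
    | succ n hn ih =>
      have hkey := key n
      have hexp : γ ^ ((1:ℝ)/2^(n-1)) ≤ γ ^ ((1:ℝ)/2^n) := by
        apply Real.rpow_le_rpow_of_exponent_ge hγpos hγ1
        apply one_div_le_one_div_of_le (by positivity)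
        exact pow_le_pow_right₀ (by norm_num) (Nat.sub_le n 1)
      have hnn : (0:ℝ) ≤ (n:ℝ) - 1 := by
        have : (1:ℝ) ≤ (n:ℝ) := by exact_mod_cast hn
        linarith
      have h2 : G (((2:ℝ)^n)⁻¹) - G (((2:ℝ)^(1:ℕ))⁻¹) ≤ ((n:ℝ) - 1) * γ ^ ((1:ℝ)/2^n) :=
        ih.trans (mul_le_mul_of_nonneg_left hexp hnn)
      have hsub : n + 1 - 1 = n := rfl
      rw [hsub]
      push_cast
      linarith [hkey, h2]
  intro r hr
  have h1r : 1 ≤ r := le_trans (by norm_num) hr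
  have h := hsum r h1r
  have hhalf : ((2:ℝ)^(1:ℕ))⁻¹ = 1/2 := by norm_num
  rw [hhalf] at h
  have hpos : (0:ℝ) ≤ γ ^ ((1:ℝ)/2^(r-1)) := Real.rpow_nonneg hγpos.le _
  have hr1 : (1:ℝ) ≤ (r:ℝ) := by exact_mod_cast h1r
  nlinarith [h, hpos]
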